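/- Let $(X,\mathcal{E})$ and $(Y,\mathcal{F})$ be coarse spaces induced by coarse metrics $\mathbf{d}_X$ (values in $\mathcal{I}_\infty$) and $\mathbf{d}_Y$ (values in $\mathcal{J}_\infty$, with $\mathcal{J}$ meet-complete), and let $f:X\to Y$. Then $f$ is bornologous (i.e., $(f\times f)(E)\in\mathcal{F}$ for every $E\in\mathcal{E}$) if and only if there is an increasing map $\Gamma:\mathcal{I}\to\mathcal{J}$ with $\mathbf{d}_Y(f(x),f(y))\leq\Gamma_\infty(\mathbf{d}_X(x,y))$ for all $x,y\in X$. -/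

import Mathlib

open Set

/-- The diagonal of `X × X`. -/
def relDiag (X : Type*) : Set (X × X) := {p | p.1 = p.2}

/-- The inverse of a relation. -/
def relInv {X : Type*} (A : Set (X × X)) : Set (X × X) := {p | (p.2, p.1) ∈ A}

/-- The product (composition) of two relations. -/
def relComp {X : Type*} (A B : Set (X × X)) : Set (X × X) :=
  {p | ∃ y, (p.1, y) ∈ A ∧ (y, p.2) ∈ B}

/-- A coarse structure on `X`: contains the diagonal, closed under subsets,
inverses, products and finite unions. -/
def IsCoarseStructure {X : Type*} (E : Set (Set (X × X))) : Prop :=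
  relDiag X ∈ E ∧ (∀ A ∈ E, ∀ B, B ⊆ A → B ∈ E) ∧ (∀ A ∈ E, relInv A ∈ E) ∧
  (∀ A ∈ E, ∀ B ∈ E, relComp A B ∈ E) ∧ (∀ A ∈ E, ∀ B ∈ E, A ∪ B ∈ E)

/-- A uniform structure on `X`. -/
def IsUniformStructure {X : Type*} (U : Set (Set (X × X))) : Prop :=
  (∀ V ∈ U, relDiag X ⊆ V) ∧ (∀ V ∈ U, ∀ W, V ⊆ W → W ∈ U) ∧
  (∀ V ∈ U, ∀ W ∈ U, V ∩ W ∈ U) ∧ (∀ V ∈ U, relInv V ∈ U) ∧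
  (∀ V ∈ U, ∃ W ∈ U, relComp W W ⊆ V)

/-- The entourage `D_α = {(x,y) : d(x,y) ≤ α}`. -/
def DD {X I : Type*} [Preorder I] (d : X → X → WithTop I) (α : I) : Set (X × X) :=
  {p | d p.1 p.2 ≤ (α : WithTop I)}

/-- The coarse structure induced by a (coarse) metric: all subsets of the sets `D_α`. -/
def coarseOf {X I : Type*} [Preorder I] (d : X → X → WithTop I) : Set (Set (X × X)) :=
  {A | ∃ α : I, A ⊆ DD d α}

/-- A coarse `I`-metric: symmetric, zero on the diagonal, with a growth map `Φ`. -/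
def IsCoarseMetric {X I : Type*} [Preorder I] [OrderBot I] (d : X → X → WithTop I) : Prop :=
  (∀ x, d x x = ((⊥ : I) : WithTop I)) ∧ (∀ x y, d x y = d y x) ∧
  ∃ Φ : I → I, ∀ α : I, relComp (DD d α) (DD d α) ⊆ DD d (Φ α)

/-- `𝒯_s`: the symmetrization `(A ∩ A⁻¹) ∪ Δ_X` of the members of `𝒯`. -/
def symPart {X : Type*} (T : Set (Set (X × X))) : Set (Set (X × X)) :=
  (fun A => (A ∩ relInv A) ∪ relDiag X) '' T

/-- `\overline{𝒯}`: all intersections of nonempty subfamilies of `𝒯_s`. -/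
def interClos {X : Type*} (T : Set (Set (X × X))) : Set (Set (X × X)) :=
  {C | ∃ S : Set (Set (X × X)), S.Nonempty ∧ S ⊆ symPart T ∧ C = ⋂₀ S}

/-- `f` is bornologous iff `d_Y ∘ (f × f) ⪯ d_X`
(with `J` meet-complete). -/
theorem stmt11 {X Y I J : Type*} [PartialOrder I] [OrderBot I] [PartialOrder J] [OrderBot J]
    (hdirI : ∀ a b : I, ∃ c : I, a ≤ c ∧ b ≤ c)
    (hdirJ : ∀ a b : J, ∃ c : J, a ≤ c ∧ b ≤ c)
    (hmcJ : ∀ S : Set J, S.Nonempty → ∃ m : J, IsGLB S m)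
    (dX : X → X → WithTop I) (hdX : IsCoarseMetric dX)
    (dY : Y → Y → WithTop J) (hdY : IsCoarseMetric dY)
    (f : X → Y) :
    (∀ E ∈ coarseOf dX, (fun p : X × X => (f p.1, f p.2)) '' E ∈ coarseOf dY) ↔
      ∃ Γ : I → J, Monotone Γ ∧
        ∀ x y : X, dY (f x) (f y) ≤ WithTop.map Γ (dX x y) := by
  constructor
  · intro hb
    have hS : ∀ α : I, ((fun p : X × X => (f p.1, f p.2)) '' DD dX α ∈ coarseOf dY) :=
      fun α => hb (DD dX α) ⟨α, subset_rfl⟩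
    set S : I → Set J := fun α => {β | (fun p : X × X => (f p.1, f p.2)) '' DD dX α ⊆ DD dY β}
      with hSdef
    choose m hm using fun α => hmcJ (S α) (hS α)
    refine ⟨m, ?_, ?_⟩
    · intro a b hab
      have hsub : S b ⊆ S a := fun β hβ =>
        subset_trans (image_mono (fun p hp =>
          le_trans hp (WithTop.coe_le_coe.mpr hab))) hβ
      exact (hm b).2 fun β hβ => (hm a).1 (hsub hβ)
    · intro x y
      cases hxy : dX x y with
      | top => simp
      | coe α =>
        rw [WithTop.map_coe]
        have hmem : (f x, f y) ∈ (fun p : X × X => (f p.1, f p.2)) '' DD dX α :=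
          ⟨(x, y), le_of_eq hxy, rfl⟩
        have hub : ∀ β ∈ S α, dY (f x) (f y) ≤ (β : WithTop J) := fun β hβ => hβ hmem
        cases hd : dY (f x) (f y) with
        | top =>
          obtain ⟨β, hβ⟩ := hS α
          exact absurd (hd ▸ hub β hβ) (by simp)
        | coe c =>
          exact WithTop.coe_le_coe.mpr
            ((hm α).2 fun β hβ => WithTop.coe_le_coe.mp (hd ▸ hub β hβ))
  · rintro ⟨Γ, hΓ, hbd⟩ E ⟨α, hE⟩
    refine ⟨Γ α, ?_⟩
    rintro p ⟨⟨x, y⟩, hxy, rfl⟩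
    have h1 : dX x y ≤ (α : WithTop I) := hE hxy
    have h2 := hbd x y
    show dY (f x) (f y) ≤ ((Γ α : J) : WithTop J)
    cases hd : dX x y with
    | top => exact absurd (hd ▸ h1) (by simp)
    | coe β =>
      calc dY (f x) (f y) ≤ WithTop.map Γ (dX x y) := h2
        _ = ((Γ β : J) : WithTop J) := by rw [hd, WithTop.map_coe]
        _ ≤ _ := WithTop.coe_le_coe.mpr (hΓ (WithTop.coe_le_coe.mp (hd ▸ h1)))
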